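/- arXiv:2203.05030 — 2 statements merged into one kernel-verified Lean document; each statement's English description precedes it below -/
import Mathlib

section
/- For every function F holomorphic on the open unit disk 𝔻, every compact set K ⊆ 𝔻, and every ε > 0, there exist an integer n ≥ 2 and complex coefficients c_2, …, c_n such that sup_{z ∈ K} |F(z) − Σ_{k=2}^{n} c_k h_k(z)| < ε; that is, the span of {h_k : k ≥ 2} is dense in the space of holomorphic functions on 𝔻 with the compact-open topology. -/
open Complex

noncomputable section

/-- `g_k(z) = Log(1 - z^k) - Log(1 - z) - log k`. -/
def gFun (k : ℕ) (z : ℂ) : ℂ :=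
  Complex.log (1 - z ^ k) - Complex.log (1 - z) - (Real.log k : ℂ)

/-- `h_k(z) = g_k(z) / (1 - z)`. -/
def hFun (k : ℕ) (z : ℂ) : ℂ := gFun k z / (1 - z)

namespace SpanHk

open ArithmeticFunction Finset
open scoped ArithmeticFunction.Moebius

/-- `f` is approximable uniformly on `K` by finite combinations of the `gFun k`, `k ≥ 2`. -/
def ApproxG (K : Set ℂ) (f : ℂ → ℂ) : Prop :=
  ∀ ε : ℝ, 0 < ε → ∃ n : ℕ, 2 ≤ n ∧ ∃ c : ℕ → ℂ,
    ∀ z ∈ K, ‖f z - ∑ k ∈ Finset.Icc 2 n, c k * gFun k z‖ < ε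

lemma sum_extend {n₁ n : ℕ} (h : n₁ ≤ n) (c : ℕ → ℂ) (φ : ℕ → ℂ) :
    ∑ k ∈ Finset.Icc 2 n, (if k ≤ n₁ then c k else 0) * φ k
      = ∑ k ∈ Finset.Icc 2 n₁, c k * φ k := by
  rw [← Finset.sum_subset (Finset.Icc_subset_Icc_right h)]
  · exact Finset.sum_congr rfl fun k hk => by
      rw [if_pos (Finset.mem_Icc.mp hk).2]
  · intro k hk hk'
    have hnle : ¬ k ≤ n₁ := fun hle => hk' (Finset.mem_Icc.mpr ⟨(Finset.mem_Icc.mp hk).1, hle⟩)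
    rw [if_neg hnle, zero_mul]

lemma ApproxG.zero (K : Set ℂ) : ApproxG K (fun _ => 0) := by
  intro ε hε
  exact ⟨2, le_refl _, fun _ => 0, fun z hz => by simp [hε]⟩

lemma ApproxG.add {K : Set ℂ} {f g : ℂ → ℂ} (hf : ApproxG K f) (hg : ApproxG K g) :
    ApproxG K (fun z => f z + g z) := by
  intro ε hε
  obtain ⟨n₁, hn₁, c₁, h₁⟩ := hf (ε/2) (by linarith)
  obtain ⟨n₂, hn₂, c₂, h₂⟩ := hg (ε/2) (by linarith)
  refine ⟨max n₁ n₂, le_trans hn₁ (le_max_left _ _),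
    fun k => (if k ≤ n₁ then c₁ k else 0) + (if k ≤ n₂ then c₂ k else 0), fun z hz => ?_⟩
  have e1 := sum_extend (le_max_left n₁ n₂) c₁ (fun k => gFun k z)
  have e2 := sum_extend (le_max_right n₁ n₂) c₂ (fun k => gFun k z)
  have hsplit : ∑ k ∈ Finset.Icc 2 (max n₁ n₂),
      ((if k ≤ n₁ then c₁ k else 0) + (if k ≤ n₂ then c₂ k else 0)) * gFun k z
      = ∑ k ∈ Finset.Icc 2 n₁, c₁ k * gFun k z + ∑ k ∈ Finset.Icc 2 n₂, c₂ k * gFun k z := by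
    rw [← e1, ← e2, ← Finset.sum_add_distrib]
    exact Finset.sum_congr rfl fun k _ => by ring
  rw [hsplit]
  calc ‖f z + g z - (∑ k ∈ Finset.Icc 2 n₁, c₁ k * gFun k z
          + ∑ k ∈ Finset.Icc 2 n₂, c₂ k * gFun k z)‖
      = ‖(f z - ∑ k ∈ Finset.Icc 2 n₁, c₁ k * gFun k z)
          + (g z - ∑ k ∈ Finset.Icc 2 n₂, c₂ k * gFun k z)‖ := by ring_nf
    _ ≤ ‖f z - ∑ k ∈ Finset.Icc 2 n₁, c₁ k * gFun k z‖
          + ‖g z - ∑ k ∈ Finset.Icc 2 n₂, c₂ k * gFun k z‖ := norm_add_le _ _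
    _ < ε/2 + ε/2 := add_lt_add (h₁ z hz) (h₂ z hz)
    _ = ε := by ring

lemma ApproxG.smul {K : Set ℂ} {f : ℂ → ℂ} (a : ℂ) (hf : ApproxG K f) :
    ApproxG K (fun z => a * f z) := by
  intro ε hε
  have hpos : 0 < ε / (‖a‖ + 1) := by positivity
  obtain ⟨n, hn, c, hc⟩ := hf _ hpos
  refine ⟨n, hn, fun k => a * c k, fun z hz => ?_⟩
  have : a * f z - ∑ k ∈ Finset.Icc 2 n, a * c k * gFun k z
      = a * (f z - ∑ k ∈ Finset.Icc 2 n, c k * gFun k z) := by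
    rw [mul_sub, Finset.mul_sum]
    congr 1
    exact Finset.sum_congr rfl fun k _ => by ring
  rw [this, norm_mul]
  have h1 : ‖a‖ * ‖f z - ∑ k ∈ Finset.Icc 2 n, c k * gFun k z‖ ≤ ‖a‖ * (ε / (‖a‖ + 1)) :=
    mul_le_mul_of_nonneg_left (hc z hz).le (norm_nonneg a)
  have h2 : ‖a‖ * (ε / (‖a‖ + 1)) < ε := by
    rw [mul_div_assoc']
    rw [div_lt_iff₀ (by positivity)]
    nlinarith [norm_nonneg a]
  linarith

lemma ApproxG.of_close {K : Set ℂ} {f : ℂ → ℂ}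
    (h : ∀ δ : ℝ, 0 < δ → ∃ f', ApproxG K f' ∧ ∀ z ∈ K, ‖f z - f' z‖ ≤ δ) :
    ApproxG K f := by
  intro ε hε
  obtain ⟨f', hf', hclose⟩ := h (ε/2) (by linarith)
  obtain ⟨n, hn, c, hc⟩ := hf' (ε/2) (by linarith)
  refine ⟨n, hn, c, fun z hz => ?_⟩
  calc ‖f z - ∑ k ∈ Finset.Icc 2 n, c k * gFun k z‖
      = ‖(f z - f' z) + (f' z - ∑ k ∈ Finset.Icc 2 n, c k * gFun k z)‖ := by ring_nf
    _ ≤ ‖f z - f' z‖ + ‖f' z - ∑ k ∈ Finset.Icc 2 n, c k * gFun k z‖ := norm_add_le _ _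
    _ < ε/2 + ε/2 := add_lt_add_of_le_of_lt (hclose z hz) (hc z hz)
    _ = ε := by ring

lemma ApproxG.sum {K : Set ℂ} {ι : Type*} (s : Finset ι) (f : ι → ℂ → ℂ)
    (h : ∀ i ∈ s, ApproxG K (f i)) : ApproxG K (fun z => ∑ i ∈ s, f i z) := by
  classical
  induction s using Finset.induction_on with
  | empty => simpa using ApproxG.zero K
  | insert a s hnotmem ih =>
    have h1 : ApproxG K (f a) := h a (Finset.mem_insert_self a s)
    have h2 : ApproxG K (fun z => ∑ i ∈ s, f i z) := ih fun i hi => h i (Finset.mem_insert_of_mem hi)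
    have := h1.add h2
    convert this using 1
    funext z
    rw [Finset.sum_insert hnotmem]

lemma approx_g {K : Set ℂ} {k : ℕ} (hk : 2 ≤ k) : ApproxG K (gFun k) := by
  intro ε hε
  refine ⟨k, hk, fun i => if i = k then 1 else 0, fun z hz => ?_⟩
  have : ∑ i ∈ Finset.Icc 2 k, (if i = k then (1:ℂ) else 0) * gFun i z
      = gFun k z := by
    rw [Finset.sum_eq_single k]
    · simp
    · intro b _ hb; simp [hb]
    · intro hknot; exact absurd (Finset.mem_Icc.mpr ⟨hk, le_refl k⟩) hknot
  rw [this]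
  simpa using hε

/-! ### Norm bounds for logs -/

lemma norm_log_one_sub_le {r : ℝ} (hr1 : r < 1) {w : ℂ} (hw : ‖w‖ ≤ r) :
    ‖Complex.log (1 - w)‖ ≤ ((1 - r)⁻¹ + 1) * ‖w‖ := by
  have hw1 : ‖w‖ < 1 := lt_of_le_of_lt hw hr1
  have h := Complex.norm_log_one_add_le (z := -w) (by simpa using hw1)
  rw [← sub_eq_add_neg, norm_neg] at h
  have hw0 : (0:ℝ) ≤ ‖w‖ := norm_nonneg w
  have hr0 : (0:ℝ) ≤ r := le_trans hw0 hw
  have h1r : (0:ℝ) < 1 - r := by linarith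
  have hinv : (1 - ‖w‖)⁻¹ ≤ (1 - r)⁻¹ := by
    apply inv_anti₀ h1r
    linarith
  have hrpos : (0:ℝ) < (1 - r)⁻¹ := inv_pos.mpr h1r
  have e1 : ‖w‖ ^ 2 * (1 - ‖w‖)⁻¹ ≤ ‖w‖ ^ 2 * (1 - r)⁻¹ :=
    mul_le_mul_of_nonneg_left hinv (sq_nonneg _)
  have ha : ‖w‖ ^ 2 ≤ ‖w‖ := by nlinarith
  have e2 : ‖w‖ ^ 2 * (1 - r)⁻¹ ≤ ‖w‖ * (1 - r)⁻¹ :=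
    mul_le_mul_of_nonneg_right ha hrpos.le
  have e3 : (0:ℝ) ≤ ‖w‖ * (1 - r)⁻¹ := by positivity
  nlinarith

lemma norm_logL_le {r : ℝ} (hr0 : 0 ≤ r) (hr1 : r < 1) {z : ℂ} (hz : ‖z‖ ≤ r) (j : ℕ)
    (hj : 1 ≤ j) : ‖Complex.log (1 - z ^ j)‖ ≤ ((1 - r)⁻¹ + 1) * r ^ j := by
  have hzj : ‖z ^ j‖ ≤ r ^ j := by
    rw [norm_pow]; exact pow_le_pow_left₀ (norm_nonneg z) hz j
  have hrj : r ^ j ≤ r := by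
    calc r ^ j ≤ r ^ 1 := pow_le_pow_of_le_one hr0 hr1.le hj
      _ = r := pow_one r
  have := norm_log_one_sub_le hr1 (w := z ^ j) (le_trans hzj hrj)
  calc ‖Complex.log (1 - z ^ j)‖ ≤ ((1 - r)⁻¹ + 1) * ‖z ^ j‖ := this
    _ ≤ ((1 - r)⁻¹ + 1) * r ^ j := by
        apply mul_le_mul_of_nonneg_left hzj
        have h1r : (0:ℝ) < 1 - r := by linarith
        positivity

/-! ### The Möbius inversion estimate -/

lemma hasSum_div_log (k : ℕ) (hk : 1 ≤ k) {w : ℂ} (hw : ‖w‖ < 1) :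
    HasSum (fun j : ℕ => (if k ∣ j ∧ j ≠ 0 then (k : ℂ) / j else 0) * w ^ j)
      (-Complex.log (1 - w ^ k)) := by
  have hwk : ‖w ^ k‖ < 1 := by
    rw [norm_pow]
    exact pow_lt_one₀ (norm_nonneg w) hw (by omega)
  have h := Complex.hasSum_taylorSeries_neg_log hwk
  have hinj : Function.Injective (fun n : ℕ => k * n) :=
    fun a b hab => by
      simp only at hab
      exact Nat.eq_of_mul_eq_mul_left (by omega) hab
  have hvanish : ∀ x ∉ Set.range (fun n : ℕ => k * n),
      (if k ∣ x ∧ x ≠ 0 then (k : ℂ) / x else 0) * w ^ x = 0 := by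
    intro j hj
    have hnd : ¬ (k ∣ j ∧ j ≠ 0) := by
      rintro ⟨⟨m, hm⟩, -⟩
      exact hj ⟨m, hm.symm⟩
    simp [hnd]
  rw [← Function.Injective.hasSum_iff hinj hvanish]
  convert h using 1
  funext n
  rcases Nat.eq_zero_or_pos n with rfl | hn
  · simp
  · have hkn : k ∣ k * n := Dvd.intro n rfl
    have hkn0 : k * n ≠ 0 := Nat.mul_ne_zero (by omega) (by omega)
    simp only [Function.comp_apply, if_pos (And.intro hkn hkn0)]
    rw [pow_mul]
    have hkC : (k : ℂ) ≠ 0 := Nat.cast_ne_zero.mpr (by omega)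
    have hnC : (n : ℂ) ≠ 0 := Nat.cast_ne_zero.mpr (by omega)
    push_cast
    field_simp

lemma moebius_sum_divisors (j : ℕ) :
    ∑ d ∈ j.divisors, (μ d : ℤ) = if j = 1 then 1 else 0 := by
  have h := congrArg (fun f : ArithmeticFunction ℤ => f j) moebius_mul_coe_zeta
  simp only [coe_mul_zeta_apply, one_apply] at h
  simpa using h

lemma card_divisors_le (j : ℕ) : (Nat.divisors j).card ≤ j := by
  have hsub : Nat.divisors j ⊆ Finset.Icc 1 j := by
    intro d hd
    obtain ⟨hdvd, hj0⟩ := Nat.mem_divisors.mp hd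
    have hjpos : 0 < j := Nat.pos_of_ne_zero hj0
    exact Finset.mem_Icc.mpr ⟨Nat.pos_of_dvd_of_pos hdvd hjpos, Nat.le_of_dvd hjpos hdvd⟩
  calc (Nat.divisors j).card ≤ (Finset.Icc 1 j).card := Finset.card_le_card hsub
    _ = j := by rw [Nat.card_Icc]; omega

lemma key_estimate {r : ℝ} (hr0 : 0 ≤ r) (hr1 : r < 1) (M : ℕ) (hM : 1 ≤ M)
    {w : ℂ} (hw : ‖w‖ ≤ r) :
    ‖w - ∑ k ∈ Finset.Icc 1 M, ((μ k : ℂ) / k) * (-Complex.log (1 - w ^ k))‖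
      ≤ r ^ (M + 1) * (1 - r)⁻¹ := by
  classical
  have hw1 : ‖w‖ < 1 := lt_of_le_of_lt hw hr1
  set f : ℕ → ℕ → ℂ := fun k j =>
    ((μ k : ℂ) / k) * ((if k ∣ j ∧ j ≠ 0 then (k : ℂ) / j else 0) * w ^ j) with hf
  have hS : HasSum (fun j => ∑ k ∈ Finset.Icc 1 M, f k j)
      (∑ k ∈ Finset.Icc 1 M, ((μ k : ℂ) / k) * (-Complex.log (1 - w ^ k))) :=
    hasSum_sum fun k hk =>
      (hasSum_div_log k (Finset.mem_Icc.mp hk).1 hw1).mul_left _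
  have hw' : HasSum (fun j : ℕ => if j = 1 then w else 0) w := hasSum_ite_eq 1 w
  have hd := hw'.sub hS
  set d : ℕ → ℂ := fun j => (if j = 1 then w else 0) - ∑ k ∈ Finset.Icc 1 M, f k j with hdd
  set b : ℕ → ℝ := fun j => if j ≤ M then 0 else r ^ j with hbb
  -- term-wise bound
  have hbound : ∀ j, ‖d j‖ ≤ b j := by
    intro j
    rcases Nat.eq_zero_or_pos j with rfl | hj
    · have : ∀ k ∈ Finset.Icc 1 M, f k 0 = 0 := by
        intro k _
        simp [hf]
      simp only [hdd, hbb]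
      rw [Finset.sum_eq_zero this]
      simp [Nat.zero_le M]
    · -- j ≥ 1
      have hjC : (j : ℂ) ≠ 0 := Nat.cast_ne_zero.mpr (by omega)
      have hfj : ∀ k ∈ Finset.Icc 1 M, f k j
          = (if k ∣ j then ((μ k : ℤ) : ℂ) else 0) * (w ^ j / j) := by
        intro k hk
        have hk1 : 1 ≤ k := (Finset.mem_Icc.mp hk).1
        have hkC : (k : ℂ) ≠ 0 := Nat.cast_ne_zero.mpr (by omega)
        by_cases hdvd : k ∣ j
        · rw [hf]
          simp only [hdvd, true_and, if_pos (by omega : j ≠ 0), if_pos hdvd]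
          push_cast
          field_simp
        · simp [hf, hdvd]
      have hsum : ∑ k ∈ Finset.Icc 1 M, f k j
          = ((∑ k ∈ (Finset.Icc 1 M).filter (· ∣ j), μ k : ℤ) : ℂ) * (w ^ j / j) := by
        rw [Finset.sum_congr rfl hfj, ← Finset.sum_mul]
        congr 1
        rw [Finset.sum_filter]
        push_cast
        rfl
      set s : ℤ := ∑ k ∈ (Finset.Icc 1 M).filter (· ∣ j), μ k with hs
      by_cases hjM : j ≤ M
      · -- small j : exact Möbius cancellation
        have hfilter : (Finset.Icc 1 M).filter (· ∣ j) = Nat.divisors j := by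
          ext d
          simp only [Finset.mem_filter, Finset.mem_Icc, Nat.mem_divisors]
          constructor
          · rintro ⟨⟨h1, h2⟩, h3⟩; exact ⟨h3, by omega⟩
          · rintro ⟨h1, h2⟩
            have hjpos : 0 < j := by omega
            exact ⟨⟨Nat.pos_of_dvd_of_pos h1 hjpos, le_trans (Nat.le_of_dvd hjpos h1) hjM⟩, h1⟩
        have hsval : s = if j = 1 then 1 else 0 := by
          rw [hs, hfilter]; exact moebius_sum_divisors j
        rcases eq_or_ne j 1 with rfl | hj1
        · have : d 1 = 0 := by
            simp only [hdd, hsum, hsval]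
            simp
          simp [this, hbb, hM]
        · have : d j = 0 := by
            simp only [hdd, hsum, hsval]
            simp [hj1]
          simp [this, hbb, hjM]
      · -- large j : crude bound
        have hj1 : j ≠ 1 := by omega
        have hdj : d j = -(((s : ℂ)) * (w ^ j / j)) := by
          simp only [hdd, hsum]
          simp [hj1]
        have habs : |s| ≤ (j : ℤ) := by
          have h1 : |s| ≤ ∑ k ∈ (Finset.Icc 1 M).filter (· ∣ j), |μ k| :=
            Finset.abs_sum_le_sum_abs _ _
          have h2 : ∑ k ∈ (Finset.Icc 1 M).filter (· ∣ j), |μ k|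
              ≤ ∑ _k ∈ (Finset.Icc 1 M).filter (· ∣ j), (1 : ℤ) :=
            Finset.sum_le_sum fun k _ => abs_moebius_le_one
          have h3 : ((Finset.Icc 1 M).filter (· ∣ j)).card ≤ j := by
            have hsub : (Finset.Icc 1 M).filter (· ∣ j) ⊆ Nat.divisors j := by
              intro d hd
              obtain ⟨hd1, hd2⟩ := Finset.mem_filter.mp hd
              exact Nat.mem_divisors.mpr ⟨hd2, by omega⟩
            exact le_trans (Finset.card_le_card hsub) (card_divisors_le j)
          simp only [Finset.sum_const, nsmul_eq_mul, mul_one] at h2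
          calc |s| ≤ (((Finset.Icc 1 M).filter (· ∣ j)).card : ℤ) := le_trans h1 h2
            _ ≤ (j : ℤ) := by exact_mod_cast h3
        have hnorm : ‖d j‖ = |(s : ℝ)| * (‖w‖ ^ j / j) := by
          rw [hdj, norm_neg, norm_mul, norm_div, norm_pow]
          have h1 : ‖((s : ℤ) : ℂ)‖ = |(s : ℝ)| := by
            rw [show ((s : ℤ) : ℂ) = ((s : ℝ) : ℂ) by push_cast; rfl,
              Complex.norm_real, Real.norm_eq_abs]
          have h2 : ‖((j : ℕ) : ℂ)‖ = (j : ℝ) := by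
            simp
          rw [h1, h2]
        have hjR : (0:ℝ) < j := by exact_mod_cast (by omega : 0 < j)
        have hwj : ‖w‖ ^ j ≤ r ^ j := pow_le_pow_left₀ (norm_nonneg w) hw j
        have hbj : b j = r ^ j := by simp [hbb, hjM]
        rw [hnorm, hbj]
        have hsR : |(s : ℝ)| ≤ (j : ℝ) := by
          rw [← Int.cast_abs]
          exact_mod_cast habs
        calc |(s : ℝ)| * (‖w‖ ^ j / j) ≤ (j : ℝ) * (r ^ j / j) := by
              apply mul_le_mul hsR _ (by positivity) (by positivity)
              gcongr
            _ = r ^ j := by field_simp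
  -- summability of the bound
  have hbsum : Summable b := by
    apply Summable.of_nonneg_of_le _ _ (summable_geometric_of_lt_one hr0 hr1)
    · intro j
      rcases le_or_gt j M with h | h
      · simp [hbb, h]
      · simp only [hbb, if_neg (not_le.mpr h)]
        positivity
    · intro j
      rcases le_or_gt j M with h | h
      · simp only [hbb, if_pos h]
        positivity
      · simp only [hbb, if_neg (not_le.mpr h)]
        exact le_refl _
  have hdnormsum : Summable (fun j => ‖d j‖) :=
    Summable.of_nonneg_of_le (fun j => norm_nonneg _) hbound hbsum
  have hval : w - ∑ k ∈ Finset.Icc 1 M, ((μ k : ℂ) / k) * (-Complex.log (1 - w ^ k))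
      = ∑' j, d j := hd.tsum_eq.symm
  rw [hval]
  calc ‖∑' j, d j‖ ≤ ∑' j, ‖d j‖ := norm_tsum_le_tsum_norm hdnormsum
    _ ≤ ∑' j, b j := Summable.tsum_le_tsum hbound hdnormsum hbsum
    _ ≤ r ^ (M + 1) * (1 - r)⁻¹ := by
        have hsplit := Summable.sum_add_tsum_nat_add (M + 1) hbsum
        have hzero : ∑ i ∈ Finset.range (M + 1), b i = 0 := by
          apply Finset.sum_eq_zero
          intro i hi
          have : i ≤ M := by
            have := Finset.mem_range.mp hi; omega
          simp [hbb, this]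
        have htail : ∑' i, b (i + (M + 1)) = r ^ (M + 1) * (1 - r)⁻¹ := by
          have heq : ∀ i : ℕ, b (i + (M + 1)) = r ^ i * r ^ (M + 1) := by
            intro i
            have h' : ¬ (i + (M + 1) ≤ M) := by omega
            simp only [hbb, if_neg h']
            rw [pow_add]
          rw [tsum_congr heq, tsum_mul_right, tsum_geometric_of_lt_one hr0 hr1]
          ring
        rw [← hsplit, hzero, zero_add, htail]

/-! ### Membership lemmas -/

section Members

variable {K : Set ℂ} {r : ℝ}

lemma approx_one (hr0 : 0 ≤ r) (hr1 : r < 1) (hKr : ∀ z ∈ K, ‖z‖ ≤ r) :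
    ApproxG K (fun _ => (1 : ℂ)) := by
  intro ε hε
  have h1r : (0:ℝ) < 1 - r := by linarith
  set Cr : ℝ := (1 - r)⁻¹ + 1 with hCr
  have hCrpos : 0 < Cr := by positivity
  set B : ℝ := 2 * Cr * r with hB
  have hB0 : 0 ≤ B := by positivity
  set k : ℕ := max 2 ⌈Real.exp (B / ε + 1)⌉₊ with hk
  have hk2 : 2 ≤ k := le_max_left _ _
  have hkpos : (0:ℝ) < k := by exact_mod_cast (by omega : 0 < k)
  have hlogk : B / ε + 1 ≤ Real.log k := by
    have h1 : Real.exp (B / ε + 1) ≤ (k : ℝ) := by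
      calc Real.exp (B / ε + 1) ≤ (⌈Real.exp (B / ε + 1)⌉₊ : ℝ) := Nat.le_ceil _
        _ ≤ (k : ℝ) := by exact_mod_cast Nat.cast_le.mpr (le_max_right _ _)
    calc B / ε + 1 = Real.log (Real.exp (B / ε + 1)) := (Real.log_exp _).symm
      _ ≤ Real.log k := Real.log_le_log (Real.exp_pos _) h1
  have hlogpos : 0 < Real.log k := by
    have : (0:ℝ) ≤ B / ε := by positivity
    linarith
  refine ⟨k, hk2, fun i => if i = k then -(1 / (Real.log k : ℂ)) else 0, fun z hz => ?_⟩
  have hsum : ∑ i ∈ Finset.Icc 2 k, (if i = k then -(1 / (Real.log k : ℂ)) else 0) * gFun i z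
      = -(1 / (Real.log k : ℂ)) * gFun k z := by
    rw [Finset.sum_eq_single k]
    · simp
    · intro b _ hb; simp [hb]
    · intro hknot; exact absurd (Finset.mem_Icc.mpr ⟨hk2, le_refl k⟩) hknot
  rw [hsum]
  have hlogC : ((Real.log k : ℝ) : ℂ) ≠ 0 := by
    exact_mod_cast hlogpos.ne'
  have hexpand : (1 : ℂ) - (-(1 / (Real.log k : ℂ)) * gFun k z)
      = (Complex.log (1 - z ^ k) - Complex.log (1 - z)) / (Real.log k : ℂ) := by
    rw [gFun]
    have hlogC2 : Complex.log ((k : ℕ) : ℂ) ≠ 0 := by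
      rw [← Complex.natCast_log]; exact hlogC
    field_simp
    ring
  rw [hexpand]
  rw [norm_div]
  have hden : ‖((Real.log k : ℝ) : ℂ)‖ = Real.log k := by
    rw [Complex.norm_real, Real.norm_eq_abs, abs_of_pos hlogpos]
  rw [hden]
  have hnum : ‖Complex.log (1 - z ^ k) - Complex.log (1 - z)‖ ≤ B := by
    have h1 := norm_logL_le hr0 hr1 (hKr z hz) k (by omega)
    have h2 := norm_logL_le hr0 hr1 (hKr z hz) 1 (le_refl 1)
    rw [pow_one] at h2
    have hrk : r ^ k ≤ r := by
      calc r ^ k ≤ r ^ 1 := pow_le_pow_of_le_one hr0 hr1.le (by omega)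
        _ = r := pow_one r
    calc ‖Complex.log (1 - z ^ k) - Complex.log (1 - z)‖
        ≤ ‖Complex.log (1 - z ^ k)‖ + ‖Complex.log (1 - z)‖ := norm_sub_le _ _
      _ ≤ Cr * r ^ k + Cr * r := by
          apply add_le_add
          · simpa [hCr] using h1
          · simpa [hCr, pow_one] using h2
      _ ≤ Cr * r + Cr * r := by
          apply add_le_add_left
          apply mul_le_mul_of_nonneg_left hrk hCrpos.le
      _ = B := by rw [hB]; ring
  calc ‖Complex.log (1 - z ^ k) - Complex.log (1 - z)‖ / Real.log k
      ≤ B / Real.log k := by gcongr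
    _ < ε := by
        rw [div_lt_iff₀ hlogpos]
        have : B / ε + 1 ≤ Real.log k := hlogk
        have hεlog : ε * (B / ε + 1) ≤ ε * Real.log k :=
          mul_le_mul_of_nonneg_left hlogk hε.le
        have : ε * (B / ε + 1) = B + ε := by field_simp
        nlinarith

lemma approx_const (hr0 : 0 ≤ r) (hr1 : r < 1) (hKr : ∀ z ∈ K, ‖z‖ ≤ r) (a : ℂ) :
    ApproxG K (fun _ => a) := by
  simpa using ApproxG.smul a (approx_one hr0 hr1 hKr)

lemma approx_L1 (hr0 : 0 ≤ r) (hr1 : r < 1) (hKr : ∀ z ∈ K, ‖z‖ ≤ r) :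
    ApproxG K (fun z => Complex.log (1 - z)) := by
  have h1r : (0:ℝ) < 1 - r := by linarith
  set Cr : ℝ := (1 - r)⁻¹ + 1 with hCr
  have hCrpos : 0 < Cr := by positivity
  apply ApproxG.of_close
  intro δ hδ
  obtain ⟨N, hN⟩ := exists_pow_lt_of_lt_one (show (0:ℝ) < δ / Cr by positivity) hr1
  set j : ℕ := max 2 N with hj
  have hj2 : 2 ≤ j := le_max_left _ _
  refine ⟨fun z => -gFun j z - (Real.log j : ℂ), ?_, ?_⟩
  · have h1 : ApproxG K (fun z => (-1 : ℂ) * gFun j z) := ApproxG.smul (-1) (approx_g hj2)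
    have h2 : ApproxG K (fun _ => -(Real.log j : ℂ)) := approx_const hr0 hr1 hKr _
    have h3 := h1.add h2
    convert h3 using 1
    funext z; ring
  · intro z hz
    have hexp : Complex.log (1 - z) - (-gFun j z - (Real.log j : ℂ))
        = Complex.log (1 - z ^ j) := by
      rw [gFun]; ring
    rw [hexp]
    have hb := norm_logL_le hr0 hr1 (hKr z hz) j (by omega)
    have hrj : r ^ j ≤ r ^ N := pow_le_pow_of_le_one hr0 hr1.le (le_max_right _ _)
    calc ‖Complex.log (1 - z ^ j)‖ ≤ Cr * r ^ j := hb
      _ ≤ Cr * r ^ N := mul_le_mul_of_nonneg_left hrj hCrpos.le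
      _ ≤ Cr * (δ / Cr) := mul_le_mul_of_nonneg_left hN.le hCrpos.le
      _ = δ := by field_simp

lemma approx_L (hr0 : 0 ≤ r) (hr1 : r < 1) (hKr : ∀ z ∈ K, ‖z‖ ≤ r) (j : ℕ) (hj : 1 ≤ j) :
    ApproxG K (fun z => Complex.log (1 - z ^ j)) := by
  rcases eq_or_lt_of_le hj with h1 | hj2
  · rw [← h1]
    simpa using approx_L1 hr0 hr1 hKr
  · have h1 : ApproxG K (gFun j) := approx_g hj2
    have h2 : ApproxG K (fun z => Complex.log (1 - z) + (Real.log j : ℂ)) :=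
      (approx_L1 hr0 hr1 hKr).add (approx_const hr0 hr1 hKr _)
    have h3 := h1.add h2
    convert h3 using 1
    funext z
    rw [gFun]; ring

lemma approx_pow (hr0 : 0 ≤ r) (hr1 : r < 1) (hKr : ∀ z ∈ K, ‖z‖ ≤ r) (n : ℕ) (hn : 1 ≤ n) :
    ApproxG K (fun z => z ^ n) := by
  have h1r : (0:ℝ) < 1 - r := by linarith
  apply ApproxG.of_close
  intro δ hδ
  obtain ⟨N, hN⟩ := exists_pow_lt_of_lt_one (show (0:ℝ) < δ * (1 - r) by positivity) hr1
  set M : ℕ := max 1 N with hM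
  have hM1 : 1 ≤ M := le_max_left _ _
  refine ⟨fun z => ∑ k ∈ Finset.Icc 1 M, ((μ k : ℂ) / k)
      * (-Complex.log (1 - z ^ (n * k))), ?_, ?_⟩
  · apply ApproxG.sum
    intro k hk
    have hk1 : 1 ≤ k := (Finset.mem_Icc.mp hk).1
    have h1 : ApproxG K (fun z => Complex.log (1 - z ^ (n * k))) :=
      approx_L hr0 hr1 hKr (n * k)
        (Nat.one_le_iff_ne_zero.mpr (Nat.mul_ne_zero (by omega) (by omega)))
    have h2 := ApproxG.smul (-((μ k : ℂ) / k)) h1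
    convert h2 using 1
    funext z; ring
  · intro z hz
    have hwr : ‖z ^ n‖ ≤ r := by
      rw [norm_pow]
      calc ‖z‖ ^ n ≤ r ^ n := pow_le_pow_left₀ (norm_nonneg z) (hKr z hz) n
        _ ≤ r ^ 1 := pow_le_pow_of_le_one hr0 hr1.le hn
        _ = r := pow_one r
    have hkey := key_estimate hr0 hr1 M hM1 hwr
    have heq : z ^ n - ∑ k ∈ Finset.Icc 1 M, ((μ k : ℂ)/k) * (-Complex.log (1 - z ^ (n*k)))
        = z ^ n - ∑ k ∈ Finset.Icc 1 M, ((μ k : ℂ)/k) * (-Complex.log (1 - (z ^ n) ^ k)) := by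
      congr 1
      exact Finset.sum_congr rfl fun k _ => by rw [pow_mul]
    rw [heq]
    have hMN : r ^ (M + 1) ≤ r ^ N :=
      pow_le_pow_of_le_one hr0 hr1.le (le_trans (le_max_right 1 N) (Nat.le_succ M))
    calc ‖z ^ n - ∑ k ∈ Finset.Icc 1 M, ((μ k : ℂ)/k) * (-Complex.log (1 - (z ^ n) ^ k))‖
        ≤ r ^ (M + 1) * (1 - r)⁻¹ := hkey
      _ ≤ r ^ N * (1 - r)⁻¹ := mul_le_mul_of_nonneg_right hMN (by positivity)
      _ ≤ (δ * (1 - r)) * (1 - r)⁻¹ := mul_le_mul_of_nonneg_right hN.le (by positivity)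
      _ = δ := by field_simp

lemma approx_monomial (hr0 : 0 ≤ r) (hr1 : r < 1) (hKr : ∀ z ∈ K, ‖z‖ ≤ r) (a : ℂ) (i : ℕ) :
    ApproxG K (fun z => z ^ i * a) := by
  rcases Nat.eq_zero_or_pos i with rfl | hi
  · simpa using approx_const hr0 hr1 hKr a
  · have h1 := ApproxG.smul a (approx_pow hr0 hr1 hKr i hi)
    convert h1 using 1
    funext z; ring

lemma approx_holo (hr0 : 0 ≤ r) (hr1 : r < 1) (hKr : ∀ z ∈ K, ‖z‖ ≤ r)
    (G : ℂ → ℂ) (hG : DifferentiableOn ℂ G (Metric.ball (0 : ℂ) 1)) :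
    ApproxG K G := by
  have h1r : (0:ℝ) < 1 - r := by linarith
  set R : NNReal := Real.toNNReal ((r + 2) / 3) with hR
  have hRval : (R : ℝ) = (r + 2) / 3 := Real.coe_toNNReal _ (by linarith)
  have hRpos : 0 < R := by
    have h : (0:ℝ) < (R : ℝ) := by rw [hRval]; linarith
    exact_mod_cast h
  have hsub : Metric.closedBall (0:ℂ) (R:ℝ) ⊆ Metric.ball (0:ℂ) 1 :=
    Metric.closedBall_subset_ball (by rw [hRval]; linarith)
  have hd : DifferentiableOn ℂ G (Metric.closedBall 0 (R:ℝ)) := hG.mono hsub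
  have hp := hd.hasFPowerSeriesOnBall hRpos
  set ρ : NNReal := Real.toNNReal ((2*r + 1) / 3) with hρ
  have hρval : (ρ : ℝ) = (2*r + 1) / 3 := Real.coe_toNNReal _ (by linarith)
  have hρR : (ρ : ENNReal) < (R : ENNReal) := by
    rw [ENNReal.coe_lt_coe, ← NNReal.coe_lt_coe, hρval, hRval]; linarith
  have htu := hp.tendstoUniformlyOn hρR
  rw [Metric.tendstoUniformlyOn_iff] at htu
  apply ApproxG.of_close
  intro δ hδ
  obtain ⟨n, hn⟩ := (htu δ hδ).exists
  refine ⟨fun y => (cauchyPowerSeries G 0 (R:ℝ)).partialSum n y, ?_, ?_⟩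
  · have heq : (fun y => (cauchyPowerSeries G 0 (R:ℝ)).partialSum n y)
        = fun y => ∑ i ∈ Finset.range n,
            y ^ i * ((cauchyPowerSeries G 0 (R:ℝ)).coeff i) := by
      funext y
      rw [FormalMultilinearSeries.partialSum]
      exact Finset.sum_congr rfl fun i _ => by
        rw [FormalMultilinearSeries.apply_eq_pow_smul_coeff, smul_eq_mul]
    rw [heq]
    exact ApproxG.sum _ _ fun i _ => approx_monomial hr0 hr1 hKr _ i
  · intro z hz
    have hzρ : z ∈ Metric.ball (0:ℂ) (ρ:ℝ) := by
      rw [Metric.mem_ball, dist_zero_right]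
      calc ‖z‖ ≤ r := hKr z hz
        _ < (ρ:ℝ) := by rw [hρval]; linarith
    have h2 := hn z hzρ
    rw [zero_add, dist_eq_norm] at h2
    exact h2.le

end Members

end SpanHk

/-- The span of `{h_k : k ≥ 2}` is dense in the space of holomorphic functions
on the unit disk `𝔻` with the compact-open topology: every holomorphic `F` can be approximated
uniformly on each compact `K ⊆ 𝔻` by finite linear combinations of the `h_k`. -/
theorem span_hk_dense_holomorphic
    (F : ℂ → ℂ) (hF : DifferentiableOn ℂ F (Metric.ball (0 : ℂ) 1))
    (K : Set ℂ) (hK : IsCompact K) (hKD : K ⊆ Metric.ball (0 : ℂ) 1)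
    (ε : ℝ) (hε : 0 < ε) :
    ∃ (n : ℕ), 2 ≤ n ∧ ∃ c : ℕ → ℂ,
      ∀ z ∈ K, ‖F z - ∑ k ∈ Finset.Icc 2 n, c k * hFun k z‖ < ε := by
  classical
  rcases K.eq_empty_or_nonempty with rfl | hne
  · exact ⟨2, le_refl 2, fun _ => 0, fun z hz => absurd hz (Set.notMem_empty z)⟩
  obtain ⟨z₀, hz₀K, hz₀max⟩ := hK.exists_isMaxOn hne continuous_norm.continuousOn
  set r : ℝ := ‖z₀‖ with hr
  have hr0 : 0 ≤ r := norm_nonneg _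
  have hr1 : r < 1 := by
    have h := hKD hz₀K
    rwa [Metric.mem_ball, dist_zero_right] at h
  have hKr : ∀ z ∈ K, ‖z‖ ≤ r := fun z hz => hz₀max hz
  have h1r : (0:ℝ) < 1 - r := by linarith
  set G : ℂ → ℂ := fun z => (1 - z) * F z with hG
  have hGdiff : DifferentiableOn ℂ G (Metric.ball (0:ℂ) 1) := by
    apply DifferentiableOn.mul _ hF
    exact ((differentiable_const (1:ℂ)).sub differentiable_id).differentiableOn
  have happ := SpanHk.approx_holo hr0 hr1 hKr G hGdiff
  obtain ⟨n, hn, c, hc⟩ := happ (ε * (1 - r)) (by positivity)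
  refine ⟨n, hn, c, fun z hz => ?_⟩
  have hz1 : (1:ℂ) - z ≠ 0 := by
    intro h
    have hz' : (1:ℂ) = z := sub_eq_zero.mp h
    have : ‖z‖ ≤ r := hKr z hz
    rw [← hz', norm_one] at this
    linarith
  have hnorm1z : 1 - r ≤ ‖(1:ℂ) - z‖ := by
    have h1 : ‖(1:ℂ)‖ - ‖z‖ ≤ ‖(1:ℂ) - z‖ := norm_sub_norm_le _ _
    have h2 : ‖(1:ℂ)‖ = 1 := norm_one
    have h3 := hKr z hz
    linarith
  have key : F z - ∑ k ∈ Finset.Icc 2 n, c k * hFun k z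
      = (G z - ∑ k ∈ Finset.Icc 2 n, c k * gFun k z) / (1 - z) := by
    rw [hG, sub_div]
    congr 1
    · show F z = (1 - z) * F z / (1 - z)
      rw [mul_comm, mul_div_assoc, div_self hz1, mul_one]
    · rw [Finset.sum_div]
      exact Finset.sum_congr rfl fun k _ => by rw [hFun, mul_div_assoc]
  rw [key, norm_div]
  have hden : 0 < ‖(1:ℂ) - z‖ := lt_of_lt_of_le h1r hnorm1z
  calc ‖G z - ∑ k ∈ Finset.Icc 2 n, c k * gFun k z‖ / ‖(1:ℂ) - z‖
      ≤ ‖G z - ∑ k ∈ Finset.Icc 2 n, c k * gFun k z‖ / (1 - r) := by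
        gcongr
    _ < (ε * (1 - r)) / (1 - r) := by
        gcongr
        exact hc z hz
    _ = ε := by field_simp
end
end

section
/- Fix an integer k ≥ 2. If E is a closed subspace of the Hardy space H² that contains h_k and is invariant under the shift operator S (where (Sf)(ω) = ω·f(ω)), then E = H²; equivalently, each h_k is a cyclic vector for the shift on H² (h_k is outer). -/
open MeasureTheory Complex

noncomputable section

/-- Normalized Lebesgue (arc-length) measure on the unit circle, as a measure on `ℂ`. -/
def mCirc : Measure ℂ :=
  (ENNReal.ofReal (2 * Real.pi))⁻¹ •
    Measure.map (fun θ : ℝ => Complex.exp (θ * Complex.I))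
      (volume.restrict (Set.Ioc 0 (2 * Real.pi)))

/-- The Hardy space `H²`, viewed as the set of elements of `L²(𝕋, m)` whose negative
Fourier coefficients vanish. -/
def H2 : Set (Lp ℂ 2 mCirc) :=
  {f | ∀ n : ℤ, n < 0 → (∫ ω : ℂ, f ω * ω ^ (-n) ∂mCirc) = 0}

end

open Topology Filter
open scoped ENNReal NNReal

noncomputable section Aux

def Complex.abs : AbsoluteValue ℂ ℝ := IsAbsoluteValue.toAbsoluteValue (norm : ℂ → ℝ)

@[simp] lemma Complex.norm_eq_abs (z : ℂ) : ‖z‖ = Complex.abs z := rfl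

@[simp] lemma Complex.abs_ofReal (r : ℝ) : Complex.abs (r : ℂ) = |r| := by
  rw [← Complex.norm_eq_abs, Complex.norm_real, Real.norm_eq_abs]

@[simp] lemma Complex.abs_natCast (n : ℕ) : Complex.abs n = n := Complex.norm_natCast n

lemma Circle.abs_coe (z : Circle) : Complex.abs (z : ℂ) = 1 := Circle.norm_coe z

lemma Complex.continuous_abs : Continuous Complex.abs := continuous_norm

lemma Complex.sq_abs (z : ℂ) : Complex.abs z ^ 2 = Complex.normSq z := Complex.sq_norm z

lemma Complex.re_le_abs (z : ℂ) : z.re ≤ Complex.abs z := Complex.re_le_norm z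

lemma Complex.abs_exp_sub_one_le {x : ℂ} (hx : Complex.abs x ≤ 1) :
    Complex.abs (Complex.exp x - 1) ≤ 2 * Complex.abs x := Complex.norm_exp_sub_one_le hx

lemma Complex.normSq_eq_abs (x : ℂ) : Complex.normSq x = Complex.abs x ^ 2 :=
  Complex.normSq_eq_norm_sq x

namespace HkAux

local instance fact2pi : Fact (0 < 2 * Real.pi) := ⟨Real.two_pi_pos⟩

def toC (x : AddCircle (2 * Real.pi)) : ℂ := (AddCircle.toCircle x : ℂ)

lemma continuous_toC : Continuous toC :=
  continuous_subtype_val.comp AddCircle.continuous_toCircle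

lemma toC_mk (θ : ℝ) : toC (θ : AddCircle (2 * Real.pi)) = Complex.exp (θ * Complex.I) := by
  have h : (2 * Real.pi) / (2 * Real.pi) = 1 := div_self (by positivity)
  rw [toC, AddCircle.toCircle_apply_mk, h, one_mul, Circle.coe_exp]

lemma abs_toC (x : AddCircle (2 * Real.pi)) : Complex.abs (toC x) = 1 :=
  Circle.abs_coe _

lemma mCirc_eq_map : mCirc = Measure.map toC AddCircle.haarAddCircle := by
  have hmk : Measurable ((↑) : ℝ → AddCircle (2 * Real.pi)) := AddCircle.measurable_mk'
  have hcomp : (fun θ : ℝ => Complex.exp (θ * Complex.I)) =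
      toC ∘ ((↑) : ℝ → AddCircle (2 * Real.pi)) := by
    funext θ; simp [Function.comp, toC_mk]
  have h0 : (0 : ℝ) + 2 * Real.pi = 2 * Real.pi := by ring
  have hmp := (AddCircle.measurePreserving_mk (2 * Real.pi) 0).map_eq
  rw [h0] at hmp
  rw [mCirc, hcomp, ← Measure.map_map continuous_toC.measurable hmk, hmp,
    AddCircle.volume_eq_smul_haarAddCircle, Measure.map_smul, smul_smul,
    ENNReal.inv_mul_cancel (by simp [Real.pi_ne_zero, Real.pi_pos.le, ENNReal.ofReal_eq_zero]
      <;> positivity) ENNReal.ofReal_ne_top, one_smul]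

instance : IsProbabilityMeasure mCirc := by
  rw [mCirc_eq_map]
  exact Measure.isProbabilityMeasure_map continuous_toC.measurable.aemeasurable


-- new part
lemma ae_mCirc_iff {p : ℂ → Prop} (hp : MeasurableSet {ω | p ω}) :
    (∀ᵐ ω ∂mCirc, p ω) ↔ ∀ᵐ x ∂AddCircle.haarAddCircle, p (toC x) := by
  rw [mCirc_eq_map]
  exact MeasureTheory.ae_map_iff continuous_toC.measurable.aemeasurable hp

lemma ae_mCirc_iff' {p : ℂ → Prop} (hp : MeasurableSet {ω | p ω}) :
    (∀ᵐ ω ∂mCirc, p ω) ↔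
      ∀ᵐ (θ : ℝ) ∂(volume.restrict (Set.Ioc (0:ℝ) (2 * Real.pi))),
        p (Complex.exp (θ * Complex.I)) := by
  rw [mCirc]
  rw [MeasureTheory.Measure.ae_ennreal_smul_measure_iff (c := (ENNReal.ofReal (2 * Real.pi))⁻¹)
    (by simp [ENNReal.mul_eq_top]), MeasureTheory.ae_map_iff (by fun_prop) hp]

lemma ae_abs_one : ∀ᵐ ω ∂mCirc, Complex.abs ω = 1 := by
  rw [ae_mCirc_iff (isClosed_eq Complex.continuous_abs continuous_const).measurableSet]
  exact Filter.Eventually.of_forall fun x => abs_toC x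

lemma ae_pow_ne_one {k : ℕ} (hk : k ≠ 0) : ∀ᵐ ω ∂mCirc, ω ^ k ≠ 1 := by
  have hmeas : MeasurableSet {ω : ℂ | ω ^ k ≠ 1} :=
    (isClosed_eq (continuous_pow k) continuous_const).measurableSet.compl
  rw [ae_mCirc_iff' hmeas]
  have hcnull : (volume : Measure ℝ)
      (Set.range (fun n : ℤ => (n * (2 * Real.pi) / k : ℝ))) = 0 :=
    (Set.countable_range _).measure_zero _
  refine ae_restrict_of_ae (ae_iff.mpr (measure_mono_null ?_ hcnull))
  intro θ hθ
  simp only [Set.mem_setOf_eq, not_not] at hθ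
  have h1 : Complex.exp (↑θ * Complex.I) ^ k = Complex.exp ((k : ℂ) * (↑θ * Complex.I)) :=
    (Complex.exp_nat_mul _ k).symm
  rw [h1, Complex.exp_eq_one_iff] at hθ
  obtain ⟨n, hn⟩ := hθ
  have hI : ((k : ℂ) * θ) * Complex.I = ((n : ℂ) * (2 * Real.pi)) * Complex.I := by
    rw [← mul_assoc] at hn ⊢
    rw [hn]; ring
  have h2 : (k : ℂ) * θ = (n : ℂ) * (2 * Real.pi) := mul_right_cancel₀ Complex.I_ne_zero hI
  have h3 : (k : ℝ) * θ = (n : ℝ) * (2 * Real.pi) := by exact_mod_cast h2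
  refine ⟨n, ?_⟩
  field_simp
  linarith [h3]

lemma ae_ne_one : ∀ᵐ ω ∂mCirc, ω ≠ 1 := by
  filter_upwards [ae_pow_ne_one one_ne_zero] with ω h
  simpa using h

lemma integral_mCirc (f : ℂ → ℂ) (hf : AEStronglyMeasurable f mCirc) :
    ∫ ω, f ω ∂mCirc = ∫ x, f (toC x) ∂AddCircle.haarAddCircle := by
  rw [mCirc_eq_map] at hf ⊢
  exact integral_map continuous_toC.measurable.aemeasurable hf

lemma measurable_zpowC (n : ℤ) : Measurable fun ω : ℂ => ω ^ n := by
  cases n with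
  | ofNat m => simpa using measurable_id.pow_const m
  | negSucc m => simpa [zpow_negSucc] using measurable_id.pow_const (m + 1)

lemma fourier_eq_zpow (i : ℤ) (x : AddCircle (2 * Real.pi)) :
    fourier i x = (toC x) ^ i := by
  induction x using QuotientAddGroup.induction_on with
  | H θ =>
    rw [toC_mk, fourier_coe_apply, ← Complex.exp_int_mul]
    congr 1
    have : (2 * (Real.pi : ℂ)) ≠ 0 := by
      simp [Real.pi_ne_zero]
    field_simp
    push_cast
    ring

lemma complete_L2 (f : Lp ℂ 2 mCirc)
    (h : ∀ n : ℤ, (∫ ω : ℂ, f ω * ω ^ n ∂mCirc) = 0) : (f : ℂ → ℂ) =ᵐ[mCirc] 0 := by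
  classical
  have hfae : AEStronglyMeasurable (f : ℂ → ℂ) (Measure.map toC AddCircle.haarAddCircle) := by
    rw [← mCirc_eq_map]; exact (Lp.aestronglyMeasurable f)
  have h2 : MemLp (f : ℂ → ℂ) 2 (Measure.map toC AddCircle.haarAddCircle) := by
    rw [← mCirc_eq_map]; exact Lp.memLp f
  have hmem : MemLp (fun x => f (toC x)) 2 AddCircle.haarAddCircle :=
    (memLp_map_measure_iff hfae continuous_toC.measurable.aemeasurable).mp h2
  set F' : Lp ℂ 2 (AddCircle.haarAddCircle (T := 2 * Real.pi)) := hmem.toLp _ with hF'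
  have hcoeff : ∀ i : ℤ, fourierCoeff (F' : AddCircle (2 * Real.pi) → ℂ) i = 0 := by
    intro i
    have h1 : fourierCoeff (F' : AddCircle (2 * Real.pi) → ℂ) i
        = fourierCoeff (fun x => f (toC x)) i := by
      apply integral_congr_ae
      filter_upwards [hmem.coeFn_toLp] with x hx
      rw [hx]
    rw [h1]
    have h2 : fourierCoeff (fun x => f (toC x)) i
        = ∫ x, (toC x) ^ (-i) * f (toC x) ∂AddCircle.haarAddCircle := by
      unfold fourierCoeff
      congr 1; funext x
      rw [fourier_eq_zpow, smul_eq_mul]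
    rw [h2, ← integral_mCirc (fun ω => ω ^ (-i) * f ω)
      (((measurable_zpowC (-i)).aestronglyMeasurable).mul (Lp.aestronglyMeasurable f))]
    rw [← h (-i)]
    congr 1; funext ω; ring
  have hrepr : fourierBasis.repr F' = 0 := by
    ext i
    rw [fourierBasis_repr]
    simpa using hcoeff i
  have hF0 : F' = 0 := by
    apply fourierBasis.repr.injective
    rw [hrepr, map_zero]
  have hae : (fun x => f (toC x)) =ᵐ[AddCircle.haarAddCircle] 0 := by
    have := hmem.coeFn_toLp
    rw [← hF'] at this
    refine this.symm.trans ?_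
    rw [hF0]
    exact Lp.coeFn_zero _ _ _
  have hmeas : MeasurableSet {ω : ℂ | f ω = 0} := by
    have : {ω : ℂ | f ω = 0} = (f : ℂ → ℂ) ⁻¹' {0} := rfl
    rw [this]
    exact (Lp.stronglyMeasurable f).measurable (measurableSet_singleton 0)
  have hf0 : ∀ᵐ ω ∂mCirc, f ω = 0 := by
    rw [ae_mCirc_iff hmeas]
    filter_upwards [hae] with x hx
    simpa using hx
  filter_upwards [hf0] with ω h
  simpa using h


def Sfun (k : ℕ) (z : ℂ) : ℂ := ∑ i ∈ Finset.range k, z ^ i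
def Tfun (k : ℕ) (z : ℂ) : ℂ := ∑ j ∈ Finset.range k, ∑ i ∈ Finset.range j, z ^ i
def Ufun (k : ℕ) (z : ℂ) : ℂ := (1 - z) / gFun k z

lemma one_sub_mul_Sfun (k : ℕ) (z : ℂ) : (1 - z) * Sfun k z = 1 - z ^ k := by
  have h := geom_sum_mul z k
  unfold Sfun
  linear_combination (-1 : ℂ) * h

lemma one_sub_mul_Tfun (k : ℕ) (z : ℂ) : (1 - z) * Tfun k z = k - Sfun k z := by
  unfold Tfun
  rw [Finset.mul_sum]
  have h : ∀ j ∈ Finset.range k,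
      (1 - z) * ∑ i ∈ Finset.range j, z ^ i = 1 - z ^ j := fun j _ => one_sub_mul_Sfun j z
  rw [Finset.sum_congr rfl h, Finset.sum_sub_distrib, Finset.sum_const, Finset.card_range]
  unfold Sfun
  simp

lemma eq_one_of_abs_le (z : ℂ) (hz : Complex.abs z ≤ 1) (hre : 1 ≤ z.re) : z = 1 := by
  have hn : Complex.normSq z ≤ 1 := by
    have := Complex.sq_abs z
    nlinarith [Complex.abs.nonneg z]
  have him : z.im = 0 := by
    have := Complex.normSq_apply z
    nlinarith [sq_nonneg z.im]
  have hre' : z.re = 1 := by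
    have h2 := Complex.normSq_apply z
    nlinarith
  exact Complex.ext hre' him

lemma Sfun_eq_iff {k : ℕ} (hk : 2 ≤ k) {z : ℂ} (hz : Complex.abs z ≤ 1)
    (h : Sfun k z = (k : ℂ)) : z = 1 := by
  have hre : (Sfun k z).re = (k : ℝ) := by rw [h]; simp
  have hsum : (Sfun k z).re = ∑ i ∈ Finset.range k, (z ^ i).re := by
    unfold Sfun
    exact Complex.re_sum _ _
  have hle : ∀ i ∈ Finset.range k, (z ^ i).re ≤ 1 := by
    intro i _
    calc (z ^ i).re ≤ Complex.abs (z ^ i) := Complex.re_le_abs _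
    _ = Complex.abs z ^ i := by rw [map_pow]
    _ ≤ 1 := pow_le_one₀ (Complex.abs.nonneg z) hz
  have hrez : 1 ≤ z.re := by
    by_contra hlt
    push_neg at hlt
    have hlt' : ∑ i ∈ Finset.range k, (z ^ i).re < ∑ i ∈ Finset.range k, (1 : ℝ) := by
      refine Finset.sum_lt_sum hle ⟨1, Finset.mem_range.mpr (by omega), by simpa using hlt⟩
    rw [Finset.sum_const, Finset.card_range] at hlt'
    rw [hsum] at hre
    simp at hlt'
    linarith
  exact eq_one_of_abs_le z hz hrez

lemma Tfun_one {k : ℕ} (hk : 2 ≤ k) : Tfun k 1 ≠ 0 := by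
  have h : Tfun k 1 = ((∑ j ∈ Finset.range k, j : ℕ) : ℂ) := by
    unfold Tfun
    push_cast
    refine Finset.sum_congr rfl fun j _ => ?_
    simp
  rw [h]
  have h2 : 0 < ∑ j ∈ Finset.range k, j :=
    lt_of_lt_of_le (by norm_num) (Finset.single_le_sum (f := fun j => j)
      (fun i _ => Nat.zero_le i) (Finset.mem_range.mpr (by omega : 1 < k)))
  exact Nat.cast_ne_zero.mpr h2.ne'

lemma Tfun_ne_zero {k : ℕ} (hk : 2 ≤ k) {z : ℂ} (hz : Complex.abs z ≤ 1) : Tfun k z ≠ 0 := by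
  intro h0
  by_cases hz1 : z = 1
  · exact Tfun_one hk (hz1 ▸ h0)
  · have h := one_sub_mul_Tfun k z
    rw [h0, mul_zero] at h
    have hS : Sfun k z = (k : ℂ) := by linear_combination h
    exact hz1 (Sfun_eq_iff hk hz hS)

lemma continuous_Tfun (k : ℕ) : Continuous (Tfun k) := by
  unfold Tfun
  exact continuous_finset_sum _ fun j _ => continuous_finset_sum _ fun i _ => continuous_pow i

lemma exists_c0 {k : ℕ} (hk : 2 ≤ k) : ∃ c0 : ℝ, 0 < c0 ∧
    ∀ z : ℂ, Complex.abs z ≤ 1 → c0 ≤ Complex.abs (Tfun k z) := by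
  obtain ⟨z0, hz0K, hz0⟩ := IsCompact.exists_isMinOn (isCompact_closedBall (0 : ℂ) 1)
    ⟨0, by simp⟩ (Complex.continuous_abs.comp (continuous_Tfun k)).continuousOn
  refine ⟨Complex.abs (Tfun k z0), ?_, fun z hz => hz0 ?_⟩
  · have : Tfun k z0 ≠ 0 := Tfun_ne_zero hk (by simpa [Complex.dist_eq] using hz0K)
    exact (Complex.abs.pos this)
  · simpa [Metric.mem_closedBall, Complex.dist_eq] using hz

lemma exp_gFun {k : ℕ} (hk : 2 ≤ k) {z : ℂ} (h1 : z ≠ 1) (h2 : z ^ k ≠ 1) :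
    Complex.exp (gFun k z) = Sfun k z / k := by
  have h1' : (1 : ℂ) - z ≠ 0 := sub_ne_zero_of_ne (Ne.symm h1)
  have h2' : (1 : ℂ) - z ^ k ≠ 0 := sub_ne_zero_of_ne (Ne.symm h2)
  have hk0 : (k : ℂ) ≠ 0 := Nat.cast_ne_zero.mpr (by omega)
  have hlog : ((Real.log k : ℂ)) = Complex.log (k : ℂ) := by
    rw [Complex.ofReal_log (Nat.cast_nonneg k)]
    norm_num
  unfold gFun
  rw [Complex.exp_sub, Complex.exp_sub, Complex.exp_log h2', Complex.exp_log h1', hlog,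
    Complex.exp_log hk0]
  rw [div_div, div_eq_div_iff (mul_ne_zero h1' hk0) hk0]
  linear_combination (-(k:ℂ)) * one_sub_mul_Sfun k z

lemma abs_hFun_lower {k : ℕ} (hk : 2 ≤ k) : ∃ c : ℝ, 0 < c ∧
    ∀ z : ℂ, Complex.abs z ≤ 1 → z ≠ 1 → z ^ k ≠ 1 → c ≤ Complex.abs (hFun k z) := by
  obtain ⟨c0, hc0, hT⟩ := exists_c0 hk
  have hkR : (0 : ℝ) < k := by positivity
  refine ⟨min (c0 / (2 * k)) (1 / 2), lt_min (by positivity) (by norm_num), ?_⟩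
  intro z hz h1 h2
  have h1' : (1 : ℂ) - z ≠ 0 := sub_ne_zero_of_ne (Ne.symm h1)
  have habs1z : Complex.abs (1 - z) ≤ 2 := by
    have h := norm_sub_le (1 : ℂ) z
    simp only [Complex.norm_eq_abs, norm_one] at h
    linarith
  have hpos : 0 < Complex.abs (1 - z) := Complex.abs.pos h1'
  have hhF : Complex.abs (hFun k z) = Complex.abs (gFun k z) / Complex.abs (1 - z) := by
    unfold hFun; rw [map_div₀]
  set g := gFun k z with hg
  have hexp : Complex.exp g = Sfun k z / k := exp_gFun hk h1 h2
  have hk0 : (k : ℂ) ≠ 0 := Nat.cast_ne_zero.mpr (by omega)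
  have hid : Complex.exp g - 1 = -((1 - z) * Tfun k z / k) := by
    rw [hexp]
    have hTT := one_sub_mul_Tfun k z
    field_simp
    linear_combination hTT
  have habs_id : Complex.abs (Complex.exp g - 1)
      = Complex.abs (1 - z) * Complex.abs (Tfun k z) / k := by
    rw [hid, map_neg_eq_map, map_div₀, map_mul]
    simp
  rcases le_or_gt (Complex.abs g) 1 with hgle | hggt
  · have hb := Complex.abs_exp_sub_one_le hgle
    rw [habs_id] at hb
    have hTz := hT z hz
    rw [hhF, le_div_iff₀ hpos]
    calc min (c0 / (2 * k)) (1 / 2) * Complex.abs (1 - z)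
        ≤ c0 / (2 * k) * Complex.abs (1 - z) :=
          mul_le_mul_of_nonneg_right (min_le_left _ _) hpos.le
    _ ≤ Complex.abs g := by
        have hb' : Complex.abs (1 - z) * Complex.abs (Tfun k z) ≤ 2 * Complex.abs g * k :=
          by
            have := (div_le_iff₀ hkR).mp hb
            linarith
        rw [div_mul_eq_mul_div, div_le_iff₀ (by positivity)]
        calc c0 * Complex.abs (1 - z)
            ≤ Complex.abs (Tfun k z) * Complex.abs (1 - z) :=
              mul_le_mul_of_nonneg_right hTz hpos.le
        _ ≤ 2 * Complex.abs g * k := by linarith [hb']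
        _ = Complex.abs g * (2 * k) := by ring
  · rw [hhF, le_div_iff₀ hpos]
    calc min (c0 / (2 * k)) (1 / 2) * Complex.abs (1 - z) ≤ 1 / 2 * 2 := by
          apply mul_le_mul (min_le_right _ _) habs1z hpos.le (by norm_num)
    _ ≤ Complex.abs g := by linarith


lemma re_lt_one {z : ℂ} (hz : Complex.abs z ≤ 1) (h1 : z ≠ 1) : z.re < 1 := by
  by_contra h
  push_neg at h
  exact h1 (eq_one_of_abs_le z hz h)

lemma slit_one_sub {z : ℂ} (hz : Complex.abs z ≤ 1) (h1 : z ≠ 1) :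
    1 - z ∈ Complex.slitPlane := by
  rw [Complex.mem_slitPlane_iff]
  left
  have := re_lt_one hz h1
  simp only [Complex.sub_re, Complex.one_re]
  linarith

lemma slit_one_sub_pow {k : ℕ} {z : ℂ} (hz : Complex.abs z ≤ 1) (h2 : z ^ k ≠ 1) :
    1 - z ^ k ∈ Complex.slitPlane :=
  slit_one_sub (by rw [map_pow]; exact pow_le_one₀ (Complex.abs.nonneg z) hz) h2

lemma gFun_ne_zero {k : ℕ} (hk : 2 ≤ k) {z : ℂ} (hz : Complex.abs z ≤ 1)
    (h1 : z ≠ 1) (h2 : z ^ k ≠ 1) : gFun k z ≠ 0 := by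
  obtain ⟨c, hc, hb⟩ := abs_hFun_lower hk
  intro h0
  have hcb := hb z hz h1 h2
  rw [hFun, h0] at hcb
  simp at hcb
  linarith

lemma continuousAt_gFun {k : ℕ} {z : ℂ} (hz : Complex.abs z ≤ 1)
    (h1 : z ≠ 1) (h2 : z ^ k ≠ 1) : ContinuousAt (gFun k) z := by
  have ha : ContinuousAt (fun z : ℂ => Complex.log (1 - z ^ k)) z :=
    ContinuousAt.clog (continuousAt_const.sub (continuousAt_pow z k))
      (slit_one_sub_pow hz h2)
  have hb : ContinuousAt (fun z : ℂ => Complex.log (1 - z)) z :=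
    ContinuousAt.clog (continuousAt_const.sub continuousAt_id)
      (slit_one_sub hz h1)
  exact (ha.sub hb).sub continuousAt_const

lemma continuousAt_Ufun {k : ℕ} (hk : 2 ≤ k) {z : ℂ} (hz : Complex.abs z ≤ 1)
    (h1 : z ≠ 1) (h2 : z ^ k ≠ 1) : ContinuousAt (Ufun k) z :=
  (continuousAt_const.sub continuousAt_id).div (continuousAt_gFun hz h1 h2)
    (gFun_ne_zero hk hz h1 h2)

lemma ne_one_of_abs_lt {z : ℂ} (h : Complex.abs z < 1) : z ≠ 1 := by
  intro h1; rw [h1] at h; simp at h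

lemma pow_ne_one_of_abs_lt {k : ℕ} (hk : 2 ≤ k) {z : ℂ} (h : Complex.abs z < 1) : z ^ k ≠ 1 :=
  ne_one_of_abs_lt (by rw [map_pow]; exact pow_lt_one₀ (Complex.abs.nonneg z) h (by omega))

lemma differentiableAt_Ufun {k : ℕ} (hk : 2 ≤ k) {z : ℂ} (hz : Complex.abs z < 1) :
    DifferentiableAt ℂ (Ufun k) z := by
  have h1 := ne_one_of_abs_lt hz
  have h2 := pow_ne_one_of_abs_lt hk hz
  have ha : DifferentiableAt ℂ (fun z : ℂ => Complex.log (1 - z ^ k)) z :=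
    DifferentiableAt.clog ((differentiableAt_const (1:ℂ)).sub (differentiableAt_pow k))
      (slit_one_sub_pow hz.le h2)
  have hb : DifferentiableAt ℂ (fun z : ℂ => Complex.log (1 - z)) z :=
    DifferentiableAt.clog ((differentiableAt_const (1:ℂ)).sub differentiableAt_id)
      (slit_one_sub hz.le h1)
  have hg : DifferentiableAt ℂ (gFun k) z := (ha.sub hb).sub (differentiableAt_const _)
  exact DifferentiableAt.div ((differentiableAt_const (1:ℂ)).sub differentiableAt_id) hg
    (gFun_ne_zero hk hz.le h1 h2)

lemma Ufun_mul_hFun {k : ℕ} (hk : 2 ≤ k) {z : ℂ} (hz : Complex.abs z ≤ 1)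
    (h1 : z ≠ 1) (h2 : z ^ k ≠ 1) : Ufun k z * hFun k z = 1 := by
  have h1' : (1 : ℂ) - z ≠ 0 := sub_ne_zero_of_ne (Ne.symm h1)
  have hg := gFun_ne_zero hk hz h1 h2
  rw [Ufun, hFun]
  field_simp

lemma abs_Ufun_le {k : ℕ} (hk : 2 ≤ k) {c : ℝ} (hc : 0 < c)
    (hb : ∀ z : ℂ, Complex.abs z ≤ 1 → z ≠ 1 → z ^ k ≠ 1 → c ≤ Complex.abs (hFun k z))
    {z : ℂ} (hz : Complex.abs z ≤ 1) (h1 : z ≠ 1) (h2 : z ^ k ≠ 1) :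
    Complex.abs (Ufun k z) ≤ 1 / c := by
  have h1' : (1 : ℂ) - z ≠ 0 := sub_ne_zero_of_ne (Ne.symm h1)
  have hg := gFun_ne_zero hk hz h1 h2
  have hU : Ufun k z = (hFun k z)⁻¹ := by
    rw [Ufun, hFun]
    field_simp
  rw [hU, map_inv₀, one_div]
  exact inv_anti₀ hc (hb z hz h1 h2)

lemma measurable_gFun (k : ℕ) : Measurable (gFun k) := by
  unfold gFun
  exact ((Complex.measurable_log.comp (measurable_const.sub (measurable_id.pow_const k))).sub (Complex.measurable_log.comp
    (measurable_const.sub measurable_id))).sub measurable_const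

lemma measurable_hFun (k : ℕ) : Measurable (hFun k) :=
  (measurable_gFun k).div (measurable_const.sub measurable_id)

lemma measurable_Ufun (k : ℕ) : Measurable (Ufun k) :=
  (measurable_const.sub measurable_id).div (measurable_gFun k)


lemma exists_poly_close {k : ℕ} (hk : 2 ≤ k) {r : ℝ} (hr0 : 0 < r) (hr1 : r < 1)
    {ε : ℝ} (hε : 0 < ε) :
    ∃ (N : ℕ) (a : ℕ → ℂ), ∀ ω : ℂ, Complex.abs ω = 1 →
      Complex.abs ((∑ i ∈ Finset.range N, a i * ω ^ i) - Ufun k ((r : ℂ) * ω)) ≤ ε := by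
  set s : ℝ := (1 + r⁻¹) / 2 with hs
  have hs1 : 1 < s := by
    have : 1 < r⁻¹ := (one_lt_inv₀ hr0).mpr hr1
    rw [hs]; linarith
  have hsr : r * s < 1 := by
    rw [hs]
    have h2 : r * ((1 + r⁻¹) / 2) = (r + 1) / 2 := by field_simp
    rw [h2]; linarith
  set R : NNReal := Real.toNNReal s with hR
  have hR0 : 0 < R := by
    rw [hR, Real.toNNReal_pos]; linarith
  set f : ℂ → ℂ := fun z => Ufun k ((r : ℂ) * z) with hf
  have hd : DifferentiableOn ℂ f (Metric.closedBall (0 : ℂ) R) := by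
    intro z hz
    have hz' : Complex.abs z ≤ s := by
      rw [Metric.mem_closedBall, Complex.dist_eq, sub_zero] at hz
      simpa [hR, Real.coe_toNNReal _ (by linarith : (0:ℝ) ≤ s)] using hz
    have habs : Complex.abs ((r : ℂ) * z) < 1 := by
      rw [map_mul, Complex.abs_ofReal, abs_of_pos hr0]
      calc r * Complex.abs z ≤ r * s := by nlinarith [Complex.abs.nonneg z]
      _ < 1 := hsr
    exact ((differentiableAt_Ufun hk habs).comp z
      ((differentiableAt_const ((r : ℂ))).mul differentiableAt_id)).differentiableWithinAt
  have hps := hd.hasFPowerSeriesOnBall hR0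
  set r' : NNReal := Real.toNNReal ((1 + s) / 2) with hr'
  have hr'R : (r' : ℝ≥0∞) < (R : ℝ≥0∞) := by
    rw [ENNReal.coe_lt_coe, hr', hR, Real.toNNReal_lt_toNNReal_iff (by linarith)]
    linarith
  have htu := hps.tendstoUniformlyOn hr'R
  rw [Metric.tendstoUniformlyOn_iff] at htu
  obtain ⟨N, hN⟩ := (htu ε hε).exists
  refine ⟨N, fun i => (cauchyPowerSeries f 0 R).coeff i, fun ω hω => ?_⟩
  have hωball : ω ∈ Metric.ball (0 : ℂ) (r' : ℝ) := by
    rw [Metric.mem_ball, Complex.dist_eq, sub_zero, Complex.norm_eq_abs, hω, hr',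
      Real.coe_toNNReal _ (by linarith : (0:ℝ) ≤ (1 + s)/2)]
    linarith
  have hNω := hN ω hωball
  rw [dist_eq_norm] at hNω
  have hps' : (cauchyPowerSeries f 0 R).partialSum N ω
      = ∑ i ∈ Finset.range N, (cauchyPowerSeries f 0 R).coeff i * ω ^ i := by
    unfold FormalMultilinearSeries.partialSum
    refine Finset.sum_congr rfl fun i _ => ?_
    rw [FormalMultilinearSeries.apply_eq_pow_smul_coeff, smul_eq_mul]
    ring
  have hfval : f (0 + ω) = Ufun k ((r : ℂ) * ω) := by rw [zero_add]
  rw [hps', hfval] at hNω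
  rw [← Complex.norm_eq_abs]
  have : (∑ i ∈ Finset.range N, (cauchyPowerSeries f 0 R).coeff i * ω ^ i)
      - Ufun k ((r : ℂ) * ω)
      = -(Ufun k ((r : ℂ) * ω) - ∑ i ∈ Finset.range N, (cauchyPowerSeries f 0 R).coeff i * ω ^ i) := by
    ring
  rw [this, norm_neg]
  exact hNω.le



lemma memLp_shift (f : Lp ℂ 2 mCirc) : MemLp (fun ω : ℂ => ω * f ω) 2 mCirc :=
  MemLp.of_le (Lp.memLp f)
    (measurable_id.aestronglyMeasurable.mul (Lp.aestronglyMeasurable f))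
    (by filter_upwards [ae_abs_one] with ω h
        rw [norm_mul]
        simp [Complex.norm_eq_abs, h])

def shiftLp (f : Lp ℂ 2 mCirc) : Lp ℂ 2 mCirc := (memLp_shift f).toLp _

lemma coeFn_shiftLp (f : Lp ℂ 2 mCirc) :
    (shiftLp f : ℂ → ℂ) =ᵐ[mCirc] fun ω => ω * f ω := MemLp.coeFn_toLp _

lemma coeFn_iter_shiftLp (f : Lp ℂ 2 mCirc) (n : ℕ) :
    ((shiftLp^[n] f : Lp ℂ 2 mCirc) : ℂ → ℂ) =ᵐ[mCirc] fun ω => ω ^ n * f ω := by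
  induction n with
  | zero =>
      simp only [Function.iterate_zero, id_eq, pow_zero]
      filter_upwards with ω
      exact (one_mul _).symm
  | succ n ih =>
      rw [Function.iterate_succ_apply']
      refine (coeFn_shiftLp _).trans ?_
      filter_upwards [ih] with ω h
      rw [h, pow_succ]
      ring

lemma eLpNorm_two_eq {G : Type*} [NormedAddCommGroup G] (f : ℂ → G) :
    eLpNorm f 2 mCirc = (∫⁻ ω, (‖f ω‖₊ : ℝ≥0∞) ^ (2:ℕ) ∂mCirc) ^ (1/2 : ℝ) := by
  rw [eLpNorm_eq_lintegral_rpow_enorm_toReal (by norm_num) (by norm_num)]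
  have h1 : ((2:ℝ≥0∞)).toReal = (2:ℝ) := by norm_num
  rw [h1]
  congr 1
  · apply lintegral_congr
    intro ω
    rw [enorm_eq_nnnorm, ← ENNReal.rpow_natCast]
    norm_num

lemma lintegral_sq_lt_top {G : Type*} [NormedAddCommGroup G] {f : ℂ → G} (hf : MemLp f 2 mCirc) :
    ∫⁻ ω, (‖f ω‖₊ : ℝ≥0∞) ^ (2:ℕ) ∂mCirc < ⊤ := by
  have h := hf.2
  rw [eLpNorm_two_eq] at h
  by_contra hcon
  push_neg at hcon
  rw [top_le_iff.mp hcon, ENNReal.top_rpow_of_pos (by norm_num)] at h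
  exact lt_irrefl _ h

lemma eLpNorm_lt_of_lintegral_sq_lt {f : ℂ → ℂ} {δ : ℝ}
    (h : ∫⁻ ω, (‖f ω‖₊ : ℝ≥0∞) ^ (2:ℕ) ∂mCirc < (ENNReal.ofReal δ) ^ (2:ℕ)) :
    eLpNorm f 2 mCirc < ENNReal.ofReal δ := by
  rw [eLpNorm_two_eq]
  have h2 := ENNReal.rpow_lt_rpow h (by norm_num : (0:ℝ) < 1/2)
  have h3 : (((ENNReal.ofReal δ) ^ (2:ℕ) : ℝ≥0∞)) ^ (1/2:ℝ) = ENNReal.ofReal δ := by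
    rw [← ENNReal.rpow_natCast (ENNReal.ofReal δ) 2, ← ENNReal.rpow_mul]
    norm_num
  rwa [h3] at h2

end HkAux

end Aux

open HkAux

/-- Fix `k ≥ 2`.  If `E` is a closed subspace of `H²` containing `h_k` and
invariant under the shift `(Sf)(ω) = ω·f(ω)`, then `E = H²`: each `h_k` is cyclic for the
shift (i.e. `h_k` is outer). -/
theorem shift_invariant_containing_hk_eq_H2 (k : ℕ) (hk2 : 2 ≤ k)
    (hk : Lp ℂ 2 mCirc)
    (hk_ae : (hk : ℂ → ℂ) =ᵐ[mCirc] hFun k)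
    (E : Submodule ℂ (Lp ℂ 2 mCirc))
    (hE_closed : IsClosed (E : Set (Lp ℂ 2 mCirc)))
    (hE_sub : (E : Set (Lp ℂ 2 mCirc)) ⊆ H2)
    (hk_mem : hk ∈ E)
    (hE_shift : ∀ f ∈ E, ∀ g : Lp ℂ 2 mCirc,
      (g : ℂ → ℂ) =ᵐ[mCirc] (fun ω => ω * f ω) → g ∈ E) :
    (E : Set (Lp ℂ 2 mCirc)) = H2 := by
  classical
  obtain ⟨c, hc, hbound⟩ := abs_hFun_lower hk2
  have hkne : k ≠ 0 := by omega
  have hae_good : ∀ᵐ ω ∂mCirc, Complex.abs ω = 1 ∧ ω ≠ 1 ∧ ω ^ k ≠ 1 := by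
    filter_upwards [ae_abs_one, ae_ne_one, ae_pow_ne_one hkne] with ω h1 h2 h3
    exact ⟨h1, h2, h3⟩
  have hmemh : MemLp (hFun k) 2 mCirc := (Lp.memLp hk).ae_eq hk_ae
  have hiter_mem : ∀ (f : Lp ℂ 2 mCirc), f ∈ E → ∀ n : ℕ, (shiftLp^[n] f) ∈ E := by
    intro f hf n
    induction n with
    | zero => simpa using hf
    | succ n ihn =>
        rw [Function.iterate_succ_apply']
        exact hE_shift _ ihn _ (coeFn_shiftLp _)
  have poly_mem : ∀ (a : ℕ → ℂ) (N : ℕ), ∃ e ∈ E, (e : ℂ → ℂ) =ᵐ[mCirc]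
      fun ω => (∑ i ∈ Finset.range N, a i * ω ^ i) * hFun k ω := by
    intro a N
    induction N with
    | zero =>
        refine ⟨0, E.zero_mem, ?_⟩
        filter_upwards [Lp.coeFn_zero (E := ℂ) 2 mCirc] with ω h
        simp [h]
    | succ N ih =>
        obtain ⟨e, heE, hee⟩ := ih
        refine ⟨e + a N • shiftLp^[N] hk,
          E.add_mem heE (E.smul_mem _ (hiter_mem hk hk_mem N)), ?_⟩
        filter_upwards [Lp.coeFn_add e (a N • shiftLp^[N] hk),
          Lp.coeFn_smul (a N) (shiftLp^[N] hk), coeFn_iter_shiftLp hk N, hee, hk_ae]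
          with ω e1 e2 e3 e4 e5
        rw [e1, Pi.add_apply, e4, e2, Pi.smul_apply, e3, e5, smul_eq_mul,
          Finset.sum_range_succ]
        ring
  have hmem1 : MemLp (fun _ : ℂ => (1:ℂ)) 2 mCirc := memLp_const 1
  set oneLp : Lp ℂ 2 mCirc := hmem1.toLp _ with honeLp
  have hChktop : eLpNorm (hFun k) 2 mCirc ≠ ⊤ := hmemh.2.ne
  set Chk : ℝ := (eLpNorm (hFun k) 2 mCirc).toReal with hChkdef
  have hChk0 : 0 ≤ Chk := ENNReal.toReal_nonneg
  set M : ℝ := 1 / c with hMdef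
  have hM0 : 0 < M := by positivity
  set r : ℕ → ℝ := fun j => 1 - 1 / ((j:ℝ) + 2) with hrdef
  have hr01 : ∀ j : ℕ, 0 < r j ∧ r j < 1 := by
    intro j
    have h2 : (0:ℝ) < (j:ℝ) + 2 := by positivity
    have h3 : 1 / ((j:ℝ) + 2) ≤ 1 / 2 := by
      apply one_div_le_one_div_of_le <;> linarith
    have h4 : 0 < 1 / ((j:ℝ)+2) := by positivity
    constructor
    · show 0 < 1 - 1 / ((j:ℝ) + 2); linarith
    · show 1 - 1 / ((j:ℝ) + 2) < 1; linarith
  set Φ : ℕ → ℂ → ℂ := fun j ω => Ufun k ((r j : ℂ) * ω) * hFun k ω - 1 with hΦdef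
  have hΦmeas : ∀ j, Measurable (Φ j) := by
    intro j
    exact (((measurable_Ufun k).comp (measurable_const.mul measurable_id)).mul
      (measurable_hFun k)).sub measurable_const
  have habsrω : ∀ (j : ℕ) (ω : ℂ), Complex.abs ω = 1 → Complex.abs ((r j : ℂ) * ω) < 1 := by
    intro j ω h1
    rw [map_mul, Complex.abs_ofReal, h1, mul_one, abs_of_pos (hr01 j).1]
    exact (hr01 j).2
  have hΦbdd : ∀ j, ∀ᵐ ω ∂mCirc, ‖Φ j ω‖ ≤ (M + 1) * (‖hFun k ω‖ + 1) := by
    intro j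
    filter_upwards [hae_good] with ω hω
    obtain ⟨h1, h2, h3⟩ := hω
    have habs := habsrω j ω h1
    have hU : Complex.abs (Ufun k ((r j : ℂ) * ω)) ≤ M :=
      abs_Ufun_le hk2 hc hbound habs.le (ne_one_of_abs_lt habs)
        (pow_ne_one_of_abs_lt hk2 habs)
    have hnn := Complex.abs.nonneg (hFun k ω)
    calc ‖Φ j ω‖ ≤ ‖Ufun k ((r j : ℂ) * ω) * hFun k ω‖ + ‖(1:ℂ)‖ := norm_sub_le _ _
    _ = Complex.abs (Ufun k ((r j : ℂ) * ω)) * Complex.abs (hFun k ω) + 1 := by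
          rw [norm_mul]; simp [Complex.norm_eq_abs]
    _ ≤ (M + 1) * (‖hFun k ω‖ + 1) := by
          rw [Complex.norm_eq_abs]
          nlinarith [mul_le_mul_of_nonneg_right hU hnn]
  have hΦtend : ∀ᵐ ω ∂mCirc, Filter.Tendsto (fun j => Φ j ω) Filter.atTop (𝓝 0) := by
    filter_upwards [hae_good] with ω hω
    obtain ⟨h1, h2, h3⟩ := hω
    have h4 : Filter.Tendsto (fun j : ℕ => (1 / ((j:ℝ) + 2) : ℝ)) Filter.atTop (𝓝 0) := by
      have h5 := (tendsto_one_div_add_atTop_nhds_zero_nat (𝕜 := ℝ)).comp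
        (Filter.tendsto_add_atTop_nat 1)
      convert h5 using 2 with j
      simp only [Function.comp_apply]
      push_cast
      ring
    have h6 : Filter.Tendsto r Filter.atTop (𝓝 1) := by
      have hcst : Filter.Tendsto (fun _ : ℕ => (1:ℝ)) Filter.atTop (𝓝 (1:ℝ)) :=
        tendsto_const_nhds
      rw [hrdef]
      simpa [one_div] using hcst.sub h4
    have h7 : Filter.Tendsto (fun j => ((r j : ℝ) : ℂ)) Filter.atTop (𝓝 (1:ℂ)) :=
      (Complex.continuous_ofReal.tendsto 1).comp h6
    have hrt : Filter.Tendsto (fun j : ℕ => ((r j : ℝ) : ℂ) * ω) Filter.atTop (𝓝 ω) := by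
      simpa using h7.mul_const ω
    have hUt := ((continuousAt_Ufun hk2 h1.le h2 h3).tendsto).comp hrt
    have hmul1 : Ufun k ω * hFun k ω = 1 := Ufun_mul_hFun hk2 h1.le h2 h3
    have hfin := (hUt.mul (tendsto_const_nhds (x := hFun k ω))).sub
      (tendsto_const_nhds (x := (1:ℂ)))
    rw [hmul1, sub_self] at hfin
    exact hfin
  have hdommem : MemLp (fun ω : ℂ => ‖hFun k ω‖ + 1) 2 mCirc := hmemh.norm.add (memLp_const 1)
  have hdomfin := lintegral_sq_lt_top hdommem
  set B : ℝ≥0∞ := ENNReal.ofReal (M + 1) with hBdef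
  have hBne : B ≠ ⊤ := ENNReal.ofReal_ne_top
  have hlim : Filter.Tendsto (fun j => ∫⁻ ω, (‖Φ j ω‖₊ : ℝ≥0∞) ^ (2:ℕ) ∂mCirc)
      Filter.atTop (𝓝 0) := by
    have h0 : (0:ℝ≥0∞) = ∫⁻ (_ : ℂ), (0:ℝ≥0∞) ∂mCirc := by simp
    rw [h0]
    apply tendsto_lintegral_of_dominated_convergence
      (bound := fun ω => (B * (‖(‖hFun k ω‖ + 1)‖₊ : ℝ≥0∞)) ^ (2:ℕ))
    · intro j
      exact ((hΦmeas j).nnnorm.coe_nnreal_ennreal).pow_const 2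
    · intro j
      filter_upwards [hΦbdd j] with ω hb
      have h1 : (‖Φ j ω‖₊ : ℝ≥0∞) ≤ B * (‖(‖hFun k ω‖ + 1)‖₊ : ℝ≥0∞) := by
        rw [← enorm_eq_nnnorm, ← enorm_eq_nnnorm, ← ofReal_norm, ← ofReal_norm, hBdef,
          ← ENNReal.ofReal_mul (by linarith)]
        apply ENNReal.ofReal_le_ofReal
        have hnn : (0:ℝ) ≤ ‖hFun k ω‖ + 1 := by positivity
        rw [Real.norm_of_nonneg hnn]
        exact hb
      exact pow_le_pow_left' h1 2
    · -- finiteness of bound integral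
      have hfact : ∀ ω : ℂ, ((B * (‖(‖hFun k ω‖ + 1)‖₊ : ℝ≥0∞)) ^ (2:ℕ))
          = B ^ (2:ℕ) * ((‖(‖hFun k ω‖ + 1)‖₊ : ℝ≥0∞)) ^ (2:ℕ) := by
        intro ω; rw [mul_pow]
      rw [lintegral_congr hfact, lintegral_const_mul]
      · exact (ENNReal.mul_lt_top (ENNReal.pow_lt_top hBne.lt_top) hdomfin).ne
      · exact ((((measurable_hFun k).norm.add_const 1).nnnorm).coe_nnreal_ennreal).pow_const 2
    · filter_upwards [hΦtend] with ω ht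
      have hc1 : Filter.Tendsto (fun j => (‖Φ j ω‖₊ : ℝ≥0∞)) Filter.atTop (𝓝 0) := by
        rw [show ((0:ℝ≥0∞)) = ((‖(0:ℂ)‖₊ : ℝ≥0∞)) by simp]
        exact (ENNReal.tendsto_coe.mpr ht.nnnorm)
      have := ((ENNReal.continuous_pow 2).tendsto 0).comp hc1
      simpa [Function.comp_def] using this
  -- Step 1: oneLp ∈ E
  have hone_mem : oneLp ∈ E := by
    have hclos : oneLp ∈ closure (E : Set (Lp ℂ 2 mCirc)) := by
      rw [Metric.mem_closure_iff]
      intro ε hε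
      have hevent : ∀ᶠ j in Filter.atTop,
          (∫⁻ ω, (‖Φ j ω‖₊ : ℝ≥0∞) ^ (2:ℕ) ∂mCirc) < (ENNReal.ofReal (ε/2)) ^ (2:ℕ) := by
        apply hlim.eventually_lt_const
        exact ENNReal.pow_pos (ENNReal.ofReal_pos.mpr (by linarith)) 2
      obtain ⟨j, hj⟩ := hevent.exists
      have hΦsmall : eLpNorm (Φ j) 2 mCirc < ENNReal.ofReal (ε/2) :=
        eLpNorm_lt_of_lintegral_sq_lt hj
      set ε' : ℝ := (ε/2) / (Chk + 1) with hε'def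
      have hε'0 : 0 < ε' := by positivity
      obtain ⟨N, a, hpoly⟩ := exists_poly_close hk2 (hr01 j).1 (hr01 j).2 hε'0
      obtain ⟨e, heE, hecoe⟩ := poly_mem a N
      refine ⟨e, heE, ?_⟩
      rw [Lp.dist_def]
      set q : ℂ → ℂ := fun ω => ∑ i ∈ Finset.range N, a i * ω ^ i with hqdef
      have hae1 : (⇑oneLp - ⇑e : ℂ → ℂ) =ᵐ[mCirc]
          (-((fun ω => (q ω - Ufun k ((r j : ℂ) * ω)) * hFun k ω) + Φ j)) := by
        filter_upwards [MemLp.coeFn_toLp hmem1, hecoe] with ω e1 e2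
        simp only [Pi.sub_apply, Pi.add_apply, Pi.neg_apply, honeLp, hqdef, e1, e2, hΦdef]
        ring
      rw [eLpNorm_congr_ae hae1, eLpNorm_neg]
      have hmeas1 : AEStronglyMeasurable
          (fun ω => (q ω - Ufun k ((r j : ℂ) * ω)) * hFun k ω) mCirc := by
        apply Measurable.aestronglyMeasurable
        exact (((Finset.measurable_sum _ (fun i _ =>
          (measurable_id.pow_const i).const_mul (a i))).sub
          ((measurable_Ufun k).comp (measurable_const.mul measurable_id))).mul
          (measurable_hFun k))
      have htri := eLpNorm_add_le hmeas1 (hΦmeas j).aestronglyMeasurable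
        (by norm_num : (1:ℝ≥0∞) ≤ 2)
      have hterm1 : eLpNorm (fun ω => (q ω - Ufun k ((r j : ℂ) * ω)) * hFun k ω) 2 mCirc
          ≤ ENNReal.ofReal ε' * eLpNorm (hFun k) 2 mCirc := by
        have hmono : ∀ᵐ ω ∂mCirc, ‖(q ω - Ufun k ((r j : ℂ) * ω)) * hFun k ω‖
            ≤ ‖((ε' : ℂ) • hFun k) ω‖ := by
          filter_upwards [hae_good] with ω hω
          obtain ⟨h1, _, _⟩ := hω
          simp only [Pi.smul_apply, smul_eq_mul]
          rw [norm_mul, norm_mul]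
          apply mul_le_mul_of_nonneg_right _ (norm_nonneg _)
          rw [Complex.norm_eq_abs, Complex.norm_eq_abs, Complex.abs_ofReal,
            abs_of_pos hε'0]
          exact hpoly ω h1
        calc eLpNorm (fun ω => (q ω - Ufun k ((r j : ℂ) * ω)) * hFun k ω) 2 mCirc
            ≤ eLpNorm ((ε' : ℂ) • hFun k) 2 mCirc := eLpNorm_mono_ae hmono
        _ = (‖(ε' : ℂ)‖₊ : ℝ≥0∞) * eLpNorm (hFun k) 2 mCirc := by
            rw [eLpNorm_const_smul, enorm_eq_nnnorm]
        _ = ENNReal.ofReal ε' * eLpNorm (hFun k) 2 mCirc := by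
            congr 1
            rw [← enorm_eq_nnnorm, ← ofReal_norm, Complex.norm_eq_abs, Complex.abs_ofReal,
              abs_of_pos hε'0]
      have hterm1' : ENNReal.ofReal ε' * eLpNorm (hFun k) 2 mCirc
          < ENNReal.ofReal (ε/2) := by
        rw [← ENNReal.ofReal_toReal hChktop, ← hChkdef,
          ← ENNReal.ofReal_mul hε'0.le, ENNReal.ofReal_lt_ofReal_iff (by linarith)]
        rw [hε'def, div_mul_eq_mul_div, div_lt_iff₀ (by positivity)]
        nlinarith
      have htot : eLpNorm
          ((fun ω => (q ω - Ufun k ((r j : ℂ) * ω)) * hFun k ω) + Φ j) 2 mCirc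
          < ENNReal.ofReal ε := by
        calc eLpNorm ((fun ω => (q ω - Ufun k ((r j : ℂ) * ω)) * hFun k ω) + Φ j) 2 mCirc
            ≤ _ + _ := htri
        _ < ENNReal.ofReal (ε/2) + ENNReal.ofReal (ε/2) :=
            ENNReal.add_lt_add (lt_of_le_of_lt hterm1 hterm1') hΦsmall
        _ = ENNReal.ofReal ε := by
            rw [← ENNReal.ofReal_add (by linarith) (by linarith)]
            norm_num
      exact ENNReal.toReal_lt_of_lt_ofReal htot
    rwa [hE_closed.closure_eq] at hclos
  -- Step 2: monomials
  have hmono_mem : ∀ n : ℕ, (shiftLp^[n] oneLp) ∈ E := hiter_mem oneLp hone_mem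
  have hmono_coe : ∀ n : ℕ,
      ((shiftLp^[n] oneLp : Lp ℂ 2 mCirc) : ℂ → ℂ) =ᵐ[mCirc] fun ω => ω ^ n := by
    intro n
    refine (coeFn_iter_shiftLp oneLp n).trans ?_
    filter_upwards [MemLp.coeFn_toLp hmem1] with ω h
    rw [h, mul_one]
  -- Step 3: E ⊇ H2
  refine Set.Subset.antisymm hE_sub ?_
  intro f hfH2
  haveI : CompleteSpace E := hE_closed.completeSpace_coe
  set Pf : Lp ℂ 2 mCirc := (E.orthogonalProjection f : Lp ℂ 2 mCirc) with hPfdef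
  have hPfE : Pf ∈ E := (E.orthogonalProjection f).2
  have hψorth := Submodule.sub_starProjection_mem_orthogonal (K := E) f
  have hint : ∀ (g : Lp ℂ 2 mCirc) (n : ℤ),
      Integrable (fun ω => (g : ℂ → ℂ) ω * ω ^ n) mCirc := by
    intro g n
    have hg : Integrable (g : ℂ → ℂ) mCirc := (Lp.memLp g).integrable (by norm_num)
    have hzb : ∀ᵐ ω ∂mCirc, ‖(fun ω : ℂ => ω ^ n) ω‖ ≤ 1 := by
      filter_upwards [ae_abs_one] with ω h1
      show ‖ω ^ n‖ ≤ 1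
      rw [Complex.norm_eq_abs, map_zpow₀, h1, one_zpow]
    have h2 := hg.bdd_mul ((measurable_zpowC n).aestronglyMeasurable) hzb
    exact h2.congr (Filter.Eventually.of_forall fun ω => mul_comm _ _)
  have hcoeffs : ∀ n : ℤ, ∫ ω, ((f - Pf : Lp ℂ 2 mCirc) : ℂ → ℂ) ω * ω ^ n ∂mCirc = 0 := by
    intro n
    rcases lt_or_ge 0 n with hn | hn
    · have hfc : ∫ ω, (f : ℂ → ℂ) ω * ω ^ n ∂mCirc = 0 := by
        simpa using hfH2 (-n) (by omega)
      have hPc : ∫ ω, (Pf : ℂ → ℂ) ω * ω ^ n ∂mCirc = 0 := by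
        simpa using (hE_sub hPfE) (-n) (by omega)
      have hsub : ∫ ω, ((f - Pf : Lp ℂ 2 mCirc) : ℂ → ℂ) ω * ω ^ n ∂mCirc
          = (∫ ω, (f : ℂ → ℂ) ω * ω ^ n ∂mCirc)
            - ∫ ω, (Pf : ℂ → ℂ) ω * ω ^ n ∂mCirc := by
        rw [← integral_sub (hint f n) (hint Pf n)]
        apply integral_congr_ae
        filter_upwards [Lp.coeFn_sub f Pf] with ω h
        rw [h, Pi.sub_apply]
        ring
      rw [hsub, hfc, hPc, sub_zero]
    · set m : ℕ := (-n).toNat with hmdef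
      have hmn : -(m : ℤ) = n := by omega
      have horth : (inner (𝕜 := ℂ) ((shiftLp^[m] oneLp : Lp ℂ 2 mCirc)) (f - Pf)) = (0:ℂ) :=
        (Submodule.mem_orthogonal E (f - Pf)).mp hψorth _ (hmono_mem m)
      rw [MeasureTheory.L2.inner_def] at horth
      have heq : ∫ ω, ((f - Pf : Lp ℂ 2 mCirc) : ℂ → ℂ) ω * ω ^ n ∂mCirc
          = ∫ ω, (inner (𝕜 := ℂ) (((shiftLp^[m] oneLp : Lp ℂ 2 mCirc)) ω)
              (((f - Pf : Lp ℂ 2 mCirc) : ℂ → ℂ) ω)) ∂mCirc := by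
        apply integral_congr_ae
        filter_upwards [hmono_coe m, ae_abs_one] with ω h1 h2
        rw [RCLike.inner_apply, h1, map_pow]
        have hωne : ω ≠ 0 := by
          intro h0; rw [h0] at h2; simp at h2
        have hconj : (starRingEnd ℂ) ω = ω⁻¹ := by
          have hx : ω * (starRingEnd ℂ) ω = 1 := by
            rw [Complex.mul_conj]
            rw [Complex.normSq_eq_abs, h2]
            norm_num
          exact eq_inv_of_mul_eq_one_left (by rw [mul_comm] at hx; exact hx)
        rw [hconj, inv_pow, ← zpow_natCast ω m, ← zpow_neg, hmn]
      rw [heq, horth]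
  have hψae := complete_L2 (f - Pf) hcoeffs
  have hψ0 : (f - Pf : Lp ℂ 2 mCirc) = 0 :=
    Lp.ext (hψae.trans (Lp.coeFn_zero ℂ 2 mCirc).symm)
  have hfPf : f = Pf := sub_eq_zero.mp hψ0
  rw [hfPf]
  exact hPfE
end
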